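/- Let n = g·h ≤ m with g, h positive integers, 1 ≤ s ≤ h, k ≥ 1, and let γ ∈ F_{q^m} be such that 1, γ, ..., γ^{n−1} are linearly independent over F_q. Let f be a linearized polynomial over F_{q^m} of q-degree at most k−1, and let U ∈ F_{q^m}^{g×h} be the folded Gabidulin codeword of f, i.e., U_{i,j} = f(γ^{ih+j}) for 0 ≤ i ≤ g−1, 0 ≤ j ≤ h−1. Let Y ∈ F_{q^m}^{g×h} be such that the g rows of Y−U, regarded as vectors in the F_q-vector space F_{q^m}^h, span an F_q-subspace of dimension at most t (i.e., the error Y−U has F_q-rank at most t), with t ≤ g. Let Q_0, Q_1, ..., Q_s be linearized polynomials over F_{q^m} satisfying Q_0(γ^{ih+j}) + ∑_{l=1}^{s} Q_l(Y_{i,j+l−1}) = 0 for all 0 ≤ i ≤ g−1 and 0 ≤ j ≤ h−s. Then the linearized polynomial E(X) = Q_0(X) + ∑_{l=1}^{s} Q_l(f(γ^{l−1}X)) has at least (g−t)(h−s+1) roots in F_{q^m} that are linearly independent over F_q. -/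

import Mathlib

open Polynomial

/-- A polynomial is linearized (w.r.t. `q`) if its support consists of powers `q^i`. -/
def IsLinearized (q : ℕ) {F : Type*} [Field F] (f : Polynomial F) : Prop :=
  ∀ n, f.coeff n ≠ 0 → ∃ i, n = q ^ i

section Aux

variable {q : ℕ} {K F : Type*} [Field K] [Field F] [Algebra K F] [Fintype K]

lemma lin_eval_zero (hq2 : 2 ≤ q) {p : F[X]} (hp : IsLinearized q p) : p.eval 0 = 0 := by
  rw [← Polynomial.coeff_zero_eq_eval_zero]
  by_contra hc
  obtain ⟨i, hi⟩ := hp 0 hc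
  have : 0 < q ^ i := pow_pos (by omega) i
  omega

lemma lin_eval_add (hfro : ∀ (x y : F) (i : ℕ), (x + y) ^ q ^ i = x ^ q ^ i + y ^ q ^ i)
    {p : F[X]} (hp : IsLinearized q p) (x y : F) :
    p.eval (x + y) = p.eval x + p.eval y := by
  rw [Polynomial.eval_eq_sum_range, Polynomial.eval_eq_sum_range, Polynomial.eval_eq_sum_range,
    ← Finset.sum_add_distrib]
  refine Finset.sum_congr rfl fun n _ => ?_
  by_cases hc : p.coeff n = 0
  · simp [hc]
  · obtain ⟨i, rfl⟩ := hp n hc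
    rw [hfro, mul_add]

lemma lin_eval_sub (hfro : ∀ (x y : F) (i : ℕ), (x + y) ^ q ^ i = x ^ q ^ i + y ^ q ^ i)
    {p : F[X]} (hp : IsLinearized q p) (x y : F) :
    p.eval (x - y) = p.eval x - p.eval y := by
  have h := lin_eval_add hfro hp (x - y) y
  rw [sub_add_cancel] at h
  exact eq_sub_of_add_eq h.symm

lemma lin_eval_smul (hsc : ∀ (c : K) (i : ℕ), (algebraMap K F c) ^ q ^ i = algebraMap K F c)
    {p : F[X]} (hp : IsLinearized q p) (c : K) (x : F) :
    p.eval (c • x) = c • p.eval x := by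
  rw [Polynomial.eval_eq_sum_range, Polynomial.eval_eq_sum_range, Finset.smul_sum]
  refine Finset.sum_congr rfl fun n _ => ?_
  by_cases hc : p.coeff n = 0
  · simp [hc]
  · obtain ⟨i, rfl⟩ := hp n hc
    have hx : (c • x) ^ q ^ i = c • x ^ q ^ i := by
      rw [Algebra.smul_def, mul_pow, hsc, ← Algebra.smul_def]
    rw [hx, mul_smul_comm]

lemma lin_eval_sum_smul (hq2 : 2 ≤ q)
    (hfro : ∀ (x y : F) (i : ℕ), (x + y) ^ q ^ i = x ^ q ^ i + y ^ q ^ i)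
    (hsc : ∀ (c : K) (i : ℕ), (algebraMap K F c) ^ q ^ i = algebraMap K F c)
    {p : F[X]} (hp : IsLinearized q p) {ι : Type*} (s : Finset ι) (μ : ι → K) (v : ι → F) :
    p.eval (∑ i ∈ s, μ i • v i) = ∑ i ∈ s, μ i • p.eval (v i) := by
  induction s using Finset.cons_induction with
  | empty => simpa using lin_eval_zero hq2 hp
  | cons a s ha ih =>
      rw [Finset.sum_cons, Finset.sum_cons, lin_eval_add hfro hp, lin_eval_smul hsc hp, ih]

end Aux

/-- The folded-Gabidulin codeword of `f` is `U_{i,j} = f(γ^{ih+j})`. If the error `Y - U`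
has `F_q`-rank at most `t ≤ g` and the linearized polynomials `Q_0, …, Q_s` satisfy the
interpolation conditions `Q_0(γ^{ih+j}) + ∑_{l=1}^s Q_l(Y_{i,j+l-1}) = 0` for all
`0 ≤ i ≤ g-1`, `0 ≤ j ≤ h-s`, then `E(X) = Q_0(X) + ∑_{l=1}^s Q_l(f(γ^{l-1} X))` has at
least `(g-t)(h-s+1)` roots in `F_{q^m}` that are linearly independent over `F_q`. -/
theorem stmt10 (q m n g h s k t : ℕ) (hq : IsPrimePow q)
    (hg : 1 ≤ g) (hh : 1 ≤ h) (hn : n = g * h) (hnm : n ≤ m)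
    (hs : 1 ≤ s) (hsh : s ≤ h) (hk : 1 ≤ k) (htg : t ≤ g)
    {K F : Type*} [Field K] [Field F] [Algebra K F] [Fintype K] [Fintype F]
    (hK : Fintype.card K = q) (hF : Fintype.card F = q ^ m)
    (γ : F) (hγ : LinearIndependent K fun i : Fin n => γ ^ (i : ℕ))
    (f : Polynomial F) (hflin : IsLinearized q f)
    (hfdeg : ∀ i, f.coeff i ≠ 0 → ∃ j ≤ k - 1, i = q ^ j)
    (Y : ℕ → ℕ → F)
    (hrank : Module.finrank K
      ↥(Submodule.span K (Set.range fun i : Fin g =>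
          fun j : Fin h => Y (i : ℕ) (j : ℕ) - f.eval (γ ^ ((i : ℕ) * h + (j : ℕ)))))
      ≤ t)
    (Q : Fin (s + 1) → Polynomial F) (hQlin : ∀ l, IsLinearized q (Q l))
    (hinterp : ∀ i < g, ∀ j, j + s ≤ h →
      (Q 0).eval (γ ^ (i * h + j)) + ∑ l : Fin s, (Q l.succ).eval (Y i (j + (l : ℕ))) = 0) :
    ∃ β : Fin ((g - t) * (h - s + 1)) → F, LinearIndependent K β ∧
      ∀ i, (Q 0 + ∑ l : Fin s, (Q l.succ).comp (f.comp (C (γ ^ (l : ℕ)) * X))).eval (β i) = 0 := by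
  have hq2 : 2 ≤ q := hq.two_le
  -- characteristic facts
  haveI : CharP K (ringChar K) := ringChar.charP K
  obtain ⟨d, hpprime, hcard⟩ := FiniteField.card K (ringChar K)
  haveI : Fact (ringChar K).Prime := ⟨hpprime⟩
  haveI : CharP F (ringChar K) :=
    charP_of_injective_algebraMap (algebraMap K F).injective (ringChar K)
  have hqpk : q = ringChar K ^ (d : ℕ) := by rw [← hK, hcard]
  have hfro : ∀ (x y : F) (i : ℕ), (x + y) ^ q ^ i = x ^ q ^ i + y ^ q ^ i := by
    intro x y i
    rw [hqpk, ← pow_mul]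
    exact add_pow_char_pow x y _ _
  have hsc : ∀ (c : K) (i : ℕ), (algebraMap K F c) ^ q ^ i = algebraMap K F c := by
    intro c i
    rw [← map_pow]
    congr 1
    calc c ^ q ^ i = c ^ (Fintype.card K) ^ i := by rw [hK]
      _ = c := FiniteField.pow_card_pow i c
  -- the error rows
  set e : Fin g → Fin h → F :=
    fun i : Fin g => fun j : Fin h => Y (i : ℕ) (j : ℕ) - f.eval (γ ^ ((i : ℕ) * h + (j : ℕ)))
    with he
  let φ : (Fin g → K) →ₗ[K] (Fin h → F) := Fintype.linearCombination K e
  have hφapp : ∀ μ : Fin g → K, φ μ = ∑ i, μ i • e i := fun μ =>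
    Fintype.linearCombination_apply K e μ
  have hrange : LinearMap.range φ ≤ Submodule.span K (Set.range e) := by
    rintro x ⟨μ, rfl⟩
    rw [hφapp]
    exact Submodule.sum_mem _ fun i _ =>
      Submodule.smul_mem _ _ (Submodule.subset_span ⟨i, rfl⟩)
  have h1 : Module.finrank K (LinearMap.range φ) ≤ t :=
    le_trans (Submodule.finrank_mono hrange) hrank
  have h2 : Module.finrank K (LinearMap.range φ) + Module.finrank K (LinearMap.ker φ) = g := by
    rw [LinearMap.finrank_range_add_finrank_ker, Module.finrank_fin_fun]
  have hker : g - t ≤ Module.finrank K (LinearMap.ker φ) := by omega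
  -- a linearly independent family in the kernel
  let b := Module.finBasis K (LinearMap.ker φ)
  let lam : Fin (g - t) → (Fin g → K) := fun r => (b (Fin.castLE hker r) : Fin g → K)
  have hlamker : ∀ r, φ (lam r) = 0 := fun r => (b (Fin.castLE hker r)).2
  have hlamind : LinearIndependent K lam := by
    have h3 := b.linearIndependent.map' (LinearMap.ker φ).subtype (Submodule.ker_subtype _)
    exact h3.comp (Fin.castLE hker) (Fin.castLE_injective _)
  -- index injection
  have hidx : ∀ (i : Fin g) (j : Fin (h - s + 1)), (i : ℕ) * h + (j : ℕ) < n := by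
    intro i j
    have hi := i.2
    have hj := j.2
    have hjh : (j : ℕ) < h := by omega
    have : (i : ℕ) * h + (j : ℕ) < ((i : ℕ) + 1) * h := by
      rw [add_mul, one_mul]; omega
    have h4 : ((i : ℕ) + 1) * h ≤ g * h := Nat.mul_le_mul_right h i.2
    omega
  let ι : Fin g × Fin (h - s + 1) → Fin n := fun pq => ⟨(pq.1 : ℕ) * h + (pq.2 : ℕ), hidx pq.1 pq.2⟩
  have hmod : ∀ (i j : ℕ), j < h → (i * h + j) % h = j := fun i j hj => by
    rw [mul_comm, Nat.mul_add_mod, Nat.mod_eq_of_lt hj]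
  have hdiv : ∀ (i j : ℕ), j < h → (i * h + j) / h = i := fun i j hj => by
    rw [mul_comm, Nat.mul_add_div (by omega), Nat.div_eq_of_lt hj, add_zero]
  have hι : Function.Injective ι := by
    rintro ⟨i1, j1⟩ ⟨i2, j2⟩ heq
    have hnat : (i1 : ℕ) * h + (j1 : ℕ) = (i2 : ℕ) * h + (j2 : ℕ) := by
      simpa [ι] using congrArg (fun x : Fin n => (x : ℕ)) heq
    have hj1 : (j1 : ℕ) < h := by have := j1.2; omega
    have hj2 : (j2 : ℕ) < h := by have := j2.2; omega
    have hjeq : (j1 : ℕ) = (j2 : ℕ) := by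
      have := congrArg (· % h) hnat
      simpa [hmod _ _ hj1, hmod _ _ hj2] using this
    have hieq : (i1 : ℕ) = (i2 : ℕ) := by
      have := congrArg (· / h) hnat
      simpa [hdiv _ _ hj1, hdiv _ _ hj2] using this
    simp [Prod.ext_iff, Fin.ext_iff, hjeq, hieq]
  have hγι : LinearIndependent K fun pq : Fin g × Fin (h - s + 1) =>
      γ ^ ((pq.1 : ℕ) * h + (pq.2 : ℕ)) := hγ.comp ι hι
  -- the candidate roots
  let B : Fin (g - t) × Fin (h - s + 1) → F :=
    fun pr => ∑ i : Fin g, lam pr.1 i • γ ^ ((i : ℕ) * h + (pr.2 : ℕ))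
  have hBind : LinearIndependent K B := by
    rw [Fintype.linearIndependent_iff]
    intro c hc
    have hγι' := Fintype.linearIndependent_iff.mp hγι
    have hlam' := Fintype.linearIndependent_iff.mp hlamind
    -- rearrange hc into a triple sum
    have hc' : ∑ r : Fin (g - t), ∑ j : Fin (h - s + 1), ∑ i : Fin g,
        (c (r, j) * lam r i) • γ ^ ((i : ℕ) * h + (j : ℕ)) = 0 := by
      rw [← hc, Fintype.sum_prod_type]
      refine Finset.sum_congr rfl fun r _ => Finset.sum_congr rfl fun j _ => ?_
      rw [Finset.smul_sum]
      exact Finset.sum_congr rfl fun i _ => (smul_smul _ _ _).symm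
    have hkey : ∀ (i : Fin g) (j : Fin (h - s + 1)),
        (∑ r : Fin (g - t), c (r, j) * lam r i) = 0 := by
      intro i j
      refine hγι' (fun pq => ∑ r : Fin (g - t), c (r, pq.2) * lam r pq.1) ?_ (i, j)
      rw [Fintype.sum_prod_type]
      calc (∑ a : Fin g, ∑ b : Fin (h - s + 1),
            (∑ r : Fin (g - t), c (r, b) * lam r a) • γ ^ ((a : ℕ) * h + (b : ℕ)))
          = ∑ a : Fin g, ∑ b : Fin (h - s + 1), ∑ r : Fin (g - t),
              (c (r, b) * lam r a) • γ ^ ((a : ℕ) * h + (b : ℕ)) := by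
            refine Finset.sum_congr rfl fun a _ => Finset.sum_congr rfl fun bb _ => ?_
            rw [Finset.sum_smul]
        _ = ∑ b : Fin (h - s + 1), ∑ a : Fin g, ∑ r : Fin (g - t),
              (c (r, b) * lam r a) • γ ^ ((a : ℕ) * h + (b : ℕ)) := Finset.sum_comm
        _ = ∑ b : Fin (h - s + 1), ∑ r : Fin (g - t), ∑ a : Fin g,
              (c (r, b) * lam r a) • γ ^ ((a : ℕ) * h + (b : ℕ)) :=
            Finset.sum_congr rfl fun bb _ => Finset.sum_comm
        _ = ∑ r : Fin (g - t), ∑ b : Fin (h - s + 1), ∑ a : Fin g,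
              (c (r, b) * lam r a) • γ ^ ((a : ℕ) * h + (b : ℕ)) := Finset.sum_comm
        _ = 0 := hc'
    intro pr
    obtain ⟨r, j⟩ := pr
    have h0 : ∑ r' : Fin (g - t), c (r', j) • lam r' = 0 := by
      ext i
      simp only [Finset.sum_apply, Pi.smul_apply, smul_eq_mul, Pi.zero_apply]
      exact hkey i j
    exact hlam' (fun r' => c (r', j)) h0 r
  -- evaluation of the decoding polynomial
  set E : F[X] := Q 0 + ∑ l : Fin s, (Q l.succ).comp (f.comp (C (γ ^ (l : ℕ)) * X)) with hE
  have hEeval : ∀ x : F,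
      E.eval x = (Q 0).eval x + ∑ l : Fin s, (Q l.succ).eval (f.eval (γ ^ (l : ℕ) * x)) := by
    intro x
    rw [hE, Polynomial.eval_add, Polynomial.eval_finset_sum]
    congr 1
    refine Finset.sum_congr rfl fun l _ => ?_
    rw [Polynomial.eval_comp, Polynomial.eval_comp, Polynomial.eval_mul, Polynomial.eval_C,
      Polynomial.eval_X]
  have hElin : ∀ (μ : Fin g → K) (v : Fin g → F),
      E.eval (∑ i, μ i • v i) = ∑ i, μ i • E.eval (v i) := by
    intro μ v
    simp_rw [hEeval]
    have h0 : (Q 0).eval (∑ i, μ i • v i) = ∑ i, μ i • (Q 0).eval (v i) :=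
      lin_eval_sum_smul hq2 hfro hsc (hQlin 0) _ _ _
    have hl : ∀ l : Fin s, (Q l.succ).eval (f.eval (γ ^ (l : ℕ) * ∑ i, μ i • v i))
        = ∑ i, μ i • (Q l.succ).eval (f.eval (γ ^ (l : ℕ) * v i)) := by
      intro l
      rw [Finset.mul_sum]
      simp_rw [mul_smul_comm]
      rw [lin_eval_sum_smul hq2 hfro hsc hflin, lin_eval_sum_smul hq2 hfro hsc (hQlin l.succ)]
    rw [h0]
    simp_rw [hl]
    simp_rw [smul_add, Finset.smul_sum]
    rw [Finset.sum_add_distrib, Finset.sum_comm]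
  have hEgamma : ∀ (i : Fin g) (j : ℕ), j + s ≤ h →
      E.eval (γ ^ ((i : ℕ) * h + j)) =
        -∑ l : Fin s, (Q l.succ).eval
          (Y (i : ℕ) (j + (l : ℕ)) - f.eval (γ ^ ((i : ℕ) * h + (j + (l : ℕ))))) := by
    intro i j hj
    rw [hEeval]
    have hterm : ∀ l : Fin s, (Q l.succ).eval (f.eval (γ ^ (l : ℕ) * γ ^ ((i : ℕ) * h + j)))
        = (Q l.succ).eval (Y (i : ℕ) (j + (l : ℕ)))
          - (Q l.succ).eval
              (Y (i : ℕ) (j + (l : ℕ)) - f.eval (γ ^ ((i : ℕ) * h + (j + (l : ℕ))))) := by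
      intro l
      have hpow : γ ^ (l : ℕ) * γ ^ ((i : ℕ) * h + j) = γ ^ ((i : ℕ) * h + (j + (l : ℕ))) := by
        rw [← pow_add]; congr 1; ring
      rw [hpow, ← lin_eval_sub hfro (hQlin l.succ)]
      congr 1
      ring
    simp_rw [hterm]
    rw [Finset.sum_sub_distrib]
    have hint := hinterp (i : ℕ) i.2 j hj
    have : (Q 0).eval (γ ^ ((i : ℕ) * h + j))
        = -∑ l : Fin s, (Q l.succ).eval (Y (i : ℕ) (j + (l : ℕ))) := by
      exact eq_neg_of_add_eq_zero_left hint
    rw [this]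
    ring
  -- conclude
  let eqv : Fin ((g - t) * (h - s + 1)) ≃ Fin (g - t) × Fin (h - s + 1) := finProdFinEquiv.symm
  refine ⟨B ∘ eqv, hBind.comp eqv eqv.injective, ?_⟩
  intro idx
  set r := (eqv idx).1 with hr
  set j := (eqv idx).2 with hj
  show E.eval (B (eqv idx)) = 0
  have hjs : (j : ℕ) + s ≤ h := by have := j.2; omega
  have hBapp : B (eqv idx) = ∑ i : Fin g, lam r i • γ ^ ((i : ℕ) * h + (j : ℕ)) := rfl
  rw [hBapp, hElin (lam r) (fun i : Fin g => γ ^ ((i : ℕ) * h + (j : ℕ)))]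
  have hDzero : ∀ l : Fin s, ∑ i : Fin g,
      lam r i • (Y (i : ℕ) ((j : ℕ) + (l : ℕ))
        - f.eval (γ ^ ((i : ℕ) * h + ((j : ℕ) + (l : ℕ))))) = 0 := by
    intro l
    have hjl : (j : ℕ) + (l : ℕ) < h := by have := j.2; have := l.2; omega
    have hk0 := congrFun (hlamker r) ⟨(j : ℕ) + (l : ℕ), hjl⟩
    rw [hφapp] at hk0
    simpa [e, Finset.sum_apply, Pi.smul_apply] using hk0
  have hQD : ∀ l : Fin s, ∑ i : Fin g,
      lam r i • (Q l.succ).eval (Y (i : ℕ) ((j : ℕ) + (l : ℕ))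
        - f.eval (γ ^ ((i : ℕ) * h + ((j : ℕ) + (l : ℕ))))) = 0 := by
    intro l
    rw [← lin_eval_sum_smul hq2 hfro hsc (hQlin l.succ), hDzero l,
      lin_eval_zero hq2 (hQlin l.succ)]
  calc (∑ i : Fin g, lam r i • E.eval (γ ^ ((i : ℕ) * h + (j : ℕ))))
      = ∑ i : Fin g, lam r i •
          (-∑ l : Fin s, (Q l.succ).eval (Y (i : ℕ) ((j : ℕ) + (l : ℕ))
            - f.eval (γ ^ ((i : ℕ) * h + ((j : ℕ) + (l : ℕ)))))) := by
        refine Finset.sum_congr rfl fun i _ => ?_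
        rw [hEgamma i (j : ℕ) hjs]
    _ = -∑ i : Fin g, ∑ l : Fin s, lam r i • (Q l.succ).eval (Y (i : ℕ) ((j : ℕ) + (l : ℕ))
          - f.eval (γ ^ ((i : ℕ) * h + ((j : ℕ) + (l : ℕ))))) := by
        rw [← Finset.sum_neg_distrib]
        refine Finset.sum_congr rfl fun i _ => ?_
        rw [smul_neg, Finset.smul_sum]
    _ = -∑ l : Fin s, ∑ i : Fin g, lam r i • (Q l.succ).eval (Y (i : ℕ) ((j : ℕ) + (l : ℕ))
          - f.eval (γ ^ ((i : ℕ) * h + ((j : ℕ) + (l : ℕ))))) := by rw [Finset.sum_comm]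
    _ = 0 := by
        rw [Finset.sum_congr rfl fun l _ => hQD l]
        simp
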